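/- Let k > 5 be prime and T ⊆ {1,...,k} with 0 < |T| < k. Consider the linear system over nonnegative reals (P_S)_{S ∈ cyclic(T)}: for all i ∈ {1,...,k}, Σ_{S ∈ cyclic(T) : i ∈ S} P_S ≥ 1/2, and Σ_{S ∈ cyclic(T)} P_S = k/(2|T|). Then the unique solution is P_S = 1/(2|T|) for all S ∈ cyclic(T). -/

import Mathlib

/-- All cyclic shifts of a subset `T` of `ℤ/k` (identified with `Fin k`). -/
def cyclicShifts {k : ℕ} (T : Finset (Fin k)) : Finset (Finset (Fin k)) :=
  Finset.univ.image (fun t : Fin k => T.image (fun j => j + t))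

open Polynomial Finset

lemma aux_coeff {k : ℕ} (T : Finset (Fin k)) (a : Fin k) :
    (∑ j ∈ T, (X : ℚ[X]) ^ (j.val)).coeff a.val = if a ∈ T then 1 else 0 := by
  rw [Polynomial.finset_sum_coeff]
  have : ∀ j ∈ T, ((X : ℚ[X]) ^ (j.val)).coeff a.val = if j = a then 1 else 0 := by
    intro j _
    rw [Polynomial.coeff_X_pow]
    congr 1
    simp [Fin.val_inj, eq_comm]
  rw [Finset.sum_congr rfl this, Finset.sum_ite_eq' T a (fun _ => (1:ℚ))]

lemma aux_sum_ne_zero {k : ℕ} (hk : Nat.Prime k) (T : Finset (Fin k))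
    (hT0 : 0 < T.card) (hTk : T.card < k) (ξ : ℂ) (hξ : ξ ^ k = 1) :
    ∑ j ∈ T, ξ ^ (j.val) ≠ 0 := by
  haveI : NeZero k := ⟨hk.pos.ne'⟩
  haveI : Fact (Nat.Prime k) := ⟨hk⟩
  by_cases h1 : ξ = 1
  · subst h1
    simp only [one_pow, Finset.sum_const, nsmul_eq_mul, mul_one]
    exact_mod_cast (Nat.cast_ne_zero (R := ℂ)).mpr hT0.ne'
  · -- ξ is a primitive k-th root of unity
    have hprim : IsPrimitiveRoot ξ k := by
      have h := IsPrimitiveRoot.orderOf ξ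
      have hdvd : orderOf ξ ∣ k := orderOf_dvd_of_pow_eq_one hξ
      have : orderOf ξ = 1 ∨ orderOf ξ = k := (Nat.Prime.eq_one_or_self_of_dvd hk _ hdvd)
      rcases this with h' | h'
      · exact absurd (orderOf_eq_one_iff.mp h') h1
      · rwa [h'] at h
    intro hzero
    set f : ℚ[X] := ∑ j ∈ T, (X : ℚ[X]) ^ (j.val) with hf
    have haeval : Polynomial.aeval ξ f = 0 := by
      rw [hf, map_sum]
      simpa using hzero
    have hdvd : Polynomial.cyclotomic k ℚ ∣ f := by
      rw [Polynomial.cyclotomic_eq_minpoly_rat hprim hk.pos]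
      exact minpoly.dvd ℚ ξ haeval
    have hfne : f ≠ 0 := by
      obtain ⟨j0, hj0⟩ := Finset.card_pos.mp hT0
      intro h
      have := aux_coeff T j0
      rw [← hf, h] at this
      simp [hj0] at this
    obtain ⟨g, hg⟩ := hdvd
    have hcycne : Polynomial.cyclotomic k ℚ ≠ 0 := Polynomial.cyclotomic_ne_zero k ℚ
    have hgne : g ≠ 0 := by rintro rfl; simp [hg] at hfne
    have hdegf : f.natDegree ≤ k - 1 := by
      apply Polynomial.natDegree_sum_le_of_forall_le
      intro j _
      rw [Polynomial.natDegree_X_pow]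
      exact Nat.le_sub_one_of_lt j.isLt
    have hdegf' : f.natDegree ≤ k - 1 := hdegf
    have hdegc : (Polynomial.cyclotomic k ℚ).natDegree = k - 1 := by
      rw [Polynomial.natDegree_cyclotomic, Nat.totient_prime hk]
    have hmul : f.natDegree = (k - 1) + g.natDegree := by
      rw [hg, Polynomial.natDegree_mul hcycne hgne, hdegc]
    have hgdeg : g.natDegree = 0 := by omega
    obtain ⟨c, rfl⟩ : ∃ c, g = Polynomial.C c := ⟨g.coeff 0, Polynomial.eq_C_of_natDegree_eq_zero hgdeg⟩
    have hcyc : Polynomial.cyclotomic k ℚ = ∑ i ∈ Finset.range k, (X:ℚ[X])^i :=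
      Polynomial.cyclotomic_prime ℚ k
    have hcoeff : ∀ a : Fin k, (if a ∈ T then (1:ℚ) else 0) = c := by
      intro a
      have h1 := aux_coeff T a
      rw [← hf, hg, hcyc] at h1
      rw [← h1, Polynomial.coeff_mul_C, Polynomial.finset_sum_coeff]
      have : ∀ i ∈ Finset.range k, ((X:ℚ[X])^i).coeff a.val = if i = a.val then 1 else 0 := by
        intro i _; rw [Polynomial.coeff_X_pow]; congr 1; simp [eq_comm]
      rw [Finset.sum_congr rfl this, Finset.sum_ite_eq' (Finset.range k) a.val (fun _ => (1:ℚ))]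
      simp [a.isLt]
    obtain ⟨j0, hj0⟩ := Finset.card_pos.mp hT0
    have hTne : T ≠ Finset.univ := by
      intro h; rw [h, Finset.card_univ, Fintype.card_fin] at hTk; omega
    obtain ⟨a, -, ha⟩ := Finset.exists_of_ssubset (Finset.ssubset_univ_iff.mpr hTne)
    have h1 := hcoeff j0
    have h2 := hcoeff a
    rw [if_pos hj0] at h1
    rw [if_neg ha] at h2
    rw [← h1] at h2
    norm_num at h2

lemma aux_kernel {k : ℕ} (hk : Nat.Prime k) (T : Finset (Fin k))
    (hT0 : 0 < T.card) (hTk : T.card < k) (R : Fin k → ℝ)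
    (H : ∀ i : Fin k, ∑ t ∈ Finset.univ.filter (fun t => i - t ∈ T), R t = 0) :
    ∀ u, R u = 0 := by
  haveI : NeZero k := ⟨hk.pos.ne'⟩
  set ω : ℂ := Complex.exp (2 * Real.pi * Complex.I / k) with hω
  have hprim : IsPrimitiveRoot ω k := Complex.isPrimitiveRoot_exp k hk.pos.ne'
  have hωk : ω ^ k = 1 := hprim.pow_eq_one
  have hωne : ω ≠ 0 := fun h => by simp [h, zero_pow hk.pos.ne'] at hωk
  -- Claim 1: every character kills R
  have claim1 : ∀ ξ : ℂ, ξ ^ k = 1 → ∑ t : Fin k, ξ ^ (t.val) * (R t : ℂ) = 0 := by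
    intro ξ hξ
    have key : ∀ m : ℕ, ξ ^ m = ξ ^ (m % k) := by
      intro m
      conv_lhs => rw [← Nat.mod_add_div m k, pow_add, pow_mul, hξ, one_pow, mul_one]
    have mult : ∀ a b : Fin k, ξ ^ ((a + b).val) = ξ ^ a.val * ξ ^ b.val := by
      intro a b
      rw [Fin.val_add, ← key, pow_add]
    have E : ∀ i : Fin k, ∑ t ∈ Finset.univ.filter (fun t => i - t ∈ T), (R t : ℂ) = 0 := by
      intro i
      have := H i
      exact_mod_cast congrArg (Complex.ofReal) this
    have step : (0:ℂ) = ∑ i : Fin k, ξ ^ (i.val) * ∑ t ∈ Finset.univ.filter (fun t => i - t ∈ T), (R t : ℂ) := by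
      symm
      apply Finset.sum_eq_zero
      intro i _
      rw [E i, mul_zero]
    rw [show (∑ i : Fin k, ξ ^ (i.val) * ∑ t ∈ Finset.univ.filter (fun t => i - t ∈ T), (R t : ℂ))
        = (∑ j ∈ T, ξ ^ (j.val)) * ∑ t : Fin k, ξ ^ (t.val) * (R t : ℂ) from ?_] at step
    · rcases mul_eq_zero.mp step.symm with h | h
      · exact absurd h (aux_sum_ne_zero hk T hT0 hTk ξ hξ)
      · exact h
    · calc ∑ i : Fin k, ξ ^ (i.val) * ∑ t ∈ Finset.univ.filter (fun t => i - t ∈ T), (R t : ℂ)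
          = ∑ i : Fin k, ∑ t : Fin k, (if i - t ∈ T then ξ ^ (i.val) * (R t : ℂ) else 0) := by
            apply Finset.sum_congr rfl
            intro i _
            rw [Finset.mul_sum, Finset.sum_filter]
        _ = ∑ t : Fin k, ∑ i : Fin k, (if i - t ∈ T then ξ ^ (i.val) * (R t : ℂ) else 0) :=
            Finset.sum_comm
        _ = ∑ t : Fin k, ∑ j ∈ T, ξ ^ ((j + t).val) * (R t : ℂ) := by
            apply Finset.sum_congr rfl
            intro t _
            rw [← Finset.sum_filter]
            apply Finset.sum_bij' (fun i _ => i - t) (fun j _ => j + t)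
            case hi => intro a ha; exact (Finset.mem_filter.mp ha).2
            case hj => intro a ha
                       simp only [Finset.mem_filter, Finset.mem_univ, true_and,
                         add_sub_cancel_right]
                       exact ha
            case left_neg => intro a ha; exact sub_add_cancel a t
            case right_neg => intro a ha; exact add_sub_cancel_right a t
            case h => intro a ha; rw [sub_add_cancel]
        _ = ∑ t : Fin k, (∑ j ∈ T, ξ ^ (j.val)) * (ξ ^ (t.val) * (R t : ℂ)) := by
            apply Finset.sum_congr rfl
            intro t _
            rw [Finset.sum_mul]
            apply Finset.sum_congr rfl
            intro j _
            rw [mult, mul_assoc]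
        _ = (∑ j ∈ T, ξ ^ (j.val)) * ∑ t : Fin k, ξ ^ (t.val) * (R t : ℂ) := by
            rw [Finset.mul_sum]
  -- Claim 2: Fourier inversion
  intro u
  have hωu : (ω ^ u.val) ≠ 0 := pow_ne_zero _ hωne
  have geom : ∀ t : Fin k, ∑ s ∈ Finset.range k, (ω ^ t.val * (ω ^ u.val)⁻¹) ^ s
      = if t = u then (k:ℂ) else 0 := by
    intro t
    by_cases ht : t = u
    · subst ht
      rw [mul_inv_cancel₀ hωu]
      simp
    · rw [if_neg ht]
      set η : ℂ := ω ^ t.val * (ω ^ u.val)⁻¹ with hη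
      have hηk : η ^ k = 1 := by
        rw [hη, mul_pow, inv_pow, ← pow_mul, ← pow_mul, mul_comm (t.val) k, mul_comm (u.val) k,
          pow_mul, pow_mul, hωk, one_pow, one_pow, inv_one, mul_one]
      have hη1 : η ≠ 1 := by
        intro h
        rw [hη, ← div_eq_mul_inv, div_eq_one_iff_eq hωu] at h
        exact ht (Fin.ext (hprim.pow_inj t.isLt u.isLt h))
      rw [geom_sum_eq hη1, hηk, sub_self, zero_div]
  have main : (0:ℂ) = (R u : ℂ) * k := by
    calc (0:ℂ) = ∑ s ∈ Finset.range k, ((ω ^ u.val)⁻¹) ^ s *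
        (∑ t : Fin k, (ω ^ s) ^ (t.val) * (R t : ℂ)) := by
          symm
          apply Finset.sum_eq_zero
          intro s _
          rw [show ∑ t : Fin k, (ω ^ s) ^ (t.val) * (R t : ℂ) = 0 from
            claim1 (ω ^ s) (by rw [← pow_mul, mul_comm, pow_mul, hωk, one_pow]), mul_zero]
      _ = ∑ s ∈ Finset.range k, ∑ t : Fin k,
            (R t : ℂ) * (ω ^ t.val * (ω ^ u.val)⁻¹) ^ s := by
          apply Finset.sum_congr rfl
          intro s _
          rw [Finset.mul_sum]
          apply Finset.sum_congr rfl
          intro t _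
          rw [mul_pow, inv_pow, ← pow_mul ω s (t.val), mul_comm s (t.val), pow_mul]
          ring
      _ = ∑ t : Fin k, (R t : ℂ) * ∑ s ∈ Finset.range k, (ω ^ t.val * (ω ^ u.val)⁻¹) ^ s := by
          rw [Finset.sum_comm]
          apply Finset.sum_congr rfl
          intro t _
          rw [Finset.mul_sum]
      _ = (R u : ℂ) * k := by
          rw [Finset.sum_congr rfl (fun t _ => by rw [geom t])]
          simp
  have : (R u : ℂ) = 0 := by
    rcases mul_eq_zero.mp main.symm with h | h
    · exact h
    · exact absurd h (Nat.cast_ne_zero.mpr hk.pos.ne')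
  exact_mod_cast this

lemma aux_shift_inj {k : ℕ} (hk : Nat.Prime k) (T : Finset (Fin k))
    (hT0 : 0 < T.card) (hTk : T.card < k) :
    Function.Injective (fun t : Fin k => T.image (fun j => j + t)) := by
  haveI : NeZero k := ⟨hk.pos.ne'⟩
  haveI : Fact (Nat.Prime k) := ⟨hk⟩
  intro t s h
  by_contra hts
  simp only at h
  set d : Fin k := t - s with hd
  have hdne : d ≠ 0 := sub_ne_zero.mpr hts
  -- T is closed under adding d
  have hclosed : ∀ a ∈ T, a + d ∈ T := by
    intro a ha
    have : a + t ∈ T.image (fun j => j + s) := by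
      rw [← h]; exact Finset.mem_image_of_mem _ ha
    obtain ⟨j, hj, hjs⟩ := Finset.mem_image.mp this
    have : j = a + d := by
      rw [hd, ← add_sub_assoc]
      exact eq_sub_of_add_eq hjs
    rwa [← this]
  have hclosed' : ∀ (n : ℕ), ∀ a ∈ T, a + n • d ∈ T := by
    intro n
    induction n with
    | zero => intro a ha; simpa using ha
    | succ n ih =>
      intro a ha
      have := hclosed _ (ih a ha)
      rwa [succ_nsmul, ← add_assoc]
  -- d has additive order k
  have hkd : k • d = 0 := by
    simpa using (card_nsmul_eq_zero (x := d))
  have hord : addOrderOf d = k := addOrderOf_eq_prime hkd hdne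
  -- the map n ↦ a0 + n • d from Fin k is injective, hence surjective
  obtain ⟨a0, ha0⟩ := Finset.card_pos.mp hT0
  have hinj : Function.Injective (fun n : Fin k => a0 + n.val • d) := by
    intro m n hmn
    simp only [add_right_inj] at hmn
    wlog hmle : m.val ≤ n.val generalizing m n
    · exact (this hmn.symm (le_of_not_ge hmle)).symm
    have : (n.val - m.val) • d = 0 := by
      rw [sub_nsmul d hmle, hmn]
      abel
    have hdvd : addOrderOf d ∣ n.val - m.val := addOrderOf_dvd_of_nsmul_eq_zero this
    rw [hord] at hdvd
    have hz : n.val - m.val = 0 := by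
      rcases Nat.eq_zero_or_pos (n.val - m.val) with h0 | h0
      · exact h0
      · exact absurd (Nat.le_of_dvd h0 hdvd) (by omega)
    exact Fin.ext (by omega)
  have hsurj : Function.Surjective (fun n : Fin k => a0 + n.val • d) :=
    Finite.injective_iff_surjective.mp hinj
  have : T = Finset.univ := by
    apply Finset.eq_univ_iff_forall.mpr
    intro b
    obtain ⟨n, hn⟩ := hsurj b
    rw [← hn]
    exact hclosed' n.val a0 ha0
  rw [this, Finset.card_univ, Fintype.card_fin] at hTk
  omega


theorem stmt9 (k : ℕ) (hk : Nat.Prime k) (T : Finset (Fin k))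
    (hT0 : 0 < T.card) (hTk : T.card < k)
    (P : Finset (Fin k) → ℝ)
    (hP0 : ∀ S ∈ cyclicShifts T, 0 ≤ P S)
    (hPi : ∀ i : Fin k,
      (1 : ℝ)/2 ≤ ∑ S ∈ (cyclicShifts T).filter (fun S => i ∈ S), P S)
    (hPsum : ∑ S ∈ cyclicShifts T, P S = (k : ℝ) / (2 * (T.card : ℝ))) :
    ∀ S ∈ cyclicShifts T, P S = 1 / (2 * (T.card : ℝ)) := by
  haveI : NeZero k := ⟨hk.pos.ne'⟩
  set e : Fin k → Finset (Fin k) := fun t => T.image (fun j => j + t) with he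
  have einj : Function.Injective e := aux_shift_inj hk T hT0 hTk
  have hcyc : cyclicShifts T = Finset.univ.image e := rfl
  have hcard : ∀ t, (e t).card = T.card := fun t =>
    Finset.card_image_of_injective T (add_left_injective t)
  have hc0 : (T.card : ℝ) ≠ 0 := Nat.cast_ne_zero.mpr hT0.ne'
  have htrans : ∀ g : Finset (Fin k) → ℝ,
      ∑ S ∈ cyclicShifts T, g S = ∑ t : Fin k, g (e t) := by
    intro g
    rw [hcyc]
    exact Finset.sum_image (fun x _ y _ h => einj h)
  have hmem : ∀ (i t : Fin k), i ∈ e t ↔ i - t ∈ T := by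
    intro i t
    simp only [he, Finset.mem_image]
    constructor
    · rintro ⟨j, hj, rfl⟩; rwa [add_sub_cancel_right]
    · intro h; exact ⟨i - t, h, sub_add_cancel i t⟩
  have hfil : ∀ i : Fin k, ∑ S ∈ (cyclicShifts T).filter (fun S => i ∈ S), P S
      = ∑ t ∈ Finset.univ.filter (fun t => i - t ∈ T), P (e t) := by
    intro i
    rw [hcyc, Finset.filter_image, Finset.sum_image (fun x _ y _ h => einj h)]
    apply Finset.sum_congr
    · apply Finset.filter_congr
      intro t _
      simp [hmem i t]
    · intros; rfl
  have htot : ∑ i : Fin k, (∑ S ∈ (cyclicShifts T).filter (fun S => i ∈ S), P S)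
      = (k : ℝ) / 2 := by
    calc ∑ i : Fin k, (∑ S ∈ (cyclicShifts T).filter (fun S => i ∈ S), P S)
        = ∑ i : Fin k, ∑ S ∈ cyclicShifts T, (if i ∈ S then P S else 0) := by
          apply Finset.sum_congr rfl; intro i _; rw [Finset.sum_filter]
      _ = ∑ S ∈ cyclicShifts T, ∑ i : Fin k, (if i ∈ S then P S else 0) := Finset.sum_comm
      _ = ∑ S ∈ cyclicShifts T, (S.card : ℝ) * P S := by
          apply Finset.sum_congr rfl
          intro S _
          rw [Finset.sum_ite_mem, Finset.univ_inter, Finset.sum_const, nsmul_eq_mul]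
      _ = ∑ t : Fin k, ((e t).card : ℝ) * P (e t) := htrans _
      _ = (T.card : ℝ) * ∑ t : Fin k, P (e t) := by
          rw [Finset.mul_sum]
          apply Finset.sum_congr rfl
          intro t _
          rw [hcard t]
      _ = (T.card : ℝ) * ((k:ℝ) / (2 * T.card)) := by rw [← htrans P, hPsum]
      _ = (k : ℝ) / 2 := by field_simp
  have heach : ∀ i : Fin k, ∑ S ∈ (cyclicShifts T).filter (fun S => i ∈ S), P S = 1/2 := by
    have hle : ∀ i ∈ (Finset.univ : Finset (Fin k)),
        (1:ℝ)/2 ≤ ∑ S ∈ (cyclicShifts T).filter (fun S => i ∈ S), P S := fun i _ => hPi i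
    have hsum : ∑ _i : Fin k, (1:ℝ)/2
        = ∑ i : Fin k, (∑ S ∈ (cyclicShifts T).filter (fun S => i ∈ S), P S) := by
      rw [htot, Finset.sum_const, Finset.card_univ, Fintype.card_fin, nsmul_eq_mul]
      ring
    intro i
    exact ((Finset.sum_eq_sum_iff_of_le hle).mp hsum i (Finset.mem_univ i)).symm
  have hfc : ∀ i : Fin k, (Finset.univ.filter (fun t => i - t ∈ T)).card = T.card := by
    intro i
    have heq : Finset.univ.filter (fun t => i - t ∈ T) = T.image (fun j => i - j) := by
      ext t
      simp only [Finset.mem_filter, Finset.mem_univ, true_and, Finset.mem_image]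
      constructor
      · intro h; exact ⟨i - t, h, sub_sub_cancel i t⟩
      · rintro ⟨j, hj, rfl⟩; rwa [sub_sub_cancel]
    rw [heq, Finset.card_image_of_injective T sub_right_injective]
  set c : ℝ := 1 / (2 * (T.card : ℝ)) with hcdef
  have hhyp : ∀ i : Fin k,
      ∑ t ∈ Finset.univ.filter (fun t => i - t ∈ T), (P (e t) - c) = 0 := by
    intro i
    rw [Finset.sum_sub_distrib, Finset.sum_const, hfc i, ← hfil i, heach i,
      nsmul_eq_mul, hcdef]
    field_simp
    ring
  have hker := aux_kernel hk T hT0 hTk (fun t => P (e t) - c) hhyp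
  intro S hS
  rw [hcyc] at hS
  obtain ⟨t, -, rfl⟩ := Finset.mem_image.mp hS
  have := hker t
  linarith
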